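/- Let n = 3, κ = 3, f(x) = −x₁ − x₂ + 2x₁x₂ + x₃², F₁(x) = (x₁, x₁ + x₂, x₃ − 1), F₂(x) = (x₃ − 2x₂, 2 − x₃, x₁ − x₂ + x₃). For every t ∈ (0, ½), both x̃^t = (0, t, 1) and x̂^t = (t, 0, 1) are nondegenerate KKT points of the Scholtes regularization S(t) with quadratic index 0; for x̃^t the active sets are H = {2}, N₁ = {1,3}, N₂ = ∅ with unique multipliers η₂ = 1, ν₁,₁ = 2t, ν₁,₃ = 2 − t, and for x̂^t they are H = {1,2}, N₁ = {3}, N₂ = ∅ with unique multipliers η₁ = 2t/(1+2t), η₂ = 1/(1+2t), ν₁,₃ = 2 + (2t² − t)/(1+2t). Both x̃^t and x̂^t converge to (0,0,1) as t → 0. -/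

import Mathlib

open Filter Topology Set

namespace MPCCPaper

variable {n κ : ℕ}

/-- Differential of the `j`-th component of `F` at `x`. -/
noncomputable def Dc (F : (Fin n → ℝ) → Fin κ → ℝ) (j : Fin κ) (x : Fin n → ℝ) :
    (Fin n → ℝ) →L[ℝ] ℝ :=
  fderiv ℝ (fun y => F y j) x

/-- The MPCC feasible set `M`. -/
def Mset (F1 F2 : (Fin n → ℝ) → Fin κ → ℝ) : Set (Fin n → ℝ) :=
  {x | ∀ j, F1 x j * F2 x j = 0 ∧ 0 ≤ F1 x j ∧ 0 ≤ F2 x j}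

/-- Feasible set `M^S(t)` of the Scholtes regularization. -/
def MS (F1 F2 : (Fin n → ℝ) → Fin κ → ℝ) (t : ℝ) : Set (Fin n → ℝ) :=
  {x | ∀ j, F1 x j * F2 x j ≤ t ∧ 0 ≤ F1 x j ∧ 0 ≤ F2 x j}

/-- Feasible set `M^{S=}(t)` of the smoothing with equality constraints. -/
def MSeq (F1 F2 : (Fin n → ℝ) → Fin κ → ℝ) (t : ℝ) : Set (Fin n → ℝ) :=
  {x | ∀ j, F1 x j * F2 x j = t ∧ 0 ≤ F1 x j ∧ 0 ≤ F2 x j}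

def a01 (F1 F2 : (Fin n → ℝ) → Fin κ → ℝ) (x : Fin n → ℝ) : Set (Fin κ) :=
  {j | F1 x j = 0 ∧ 0 < F2 x j}

def a10 (F1 F2 : (Fin n → ℝ) → Fin κ → ℝ) (x : Fin n → ℝ) : Set (Fin κ) :=
  {j | 0 < F1 x j ∧ F2 x j = 0}

def a00 (F1 F2 : (Fin n → ℝ) → Fin κ → ℝ) (x : Fin n → ℝ) : Set (Fin κ) :=
  {j | F1 x j = 0 ∧ F2 x j = 0}

/-- Active set `H(x)` of the regularized constraints. -/
def Hset (F1 F2 : (Fin n → ℝ) → Fin κ → ℝ) (t : ℝ) (x : Fin n → ℝ) : Set (Fin κ) :=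
  {j | F1 x j * F2 x j = t}

def N1set (F1 : (Fin n → ℝ) → Fin κ → ℝ) (x : Fin n → ℝ) : Set (Fin κ) :=
  {j | F1 x j = 0}

def N2set (F2 : (Fin n → ℝ) → Fin κ → ℝ) (x : Fin n → ℝ) : Set (Fin κ) :=
  {j | F2 x j = 0}

/-- MPCC-tailored linear independence constraint qualification. -/
def MPCCLICQ (F1 F2 : (Fin n → ℝ) → Fin κ → ℝ) (x : Fin n → ℝ) : Prop :=
  LinearIndependent ℝ
    (Sum.elim
      (fun j : ↥(a01 F1 F2 x ∪ a00 F1 F2 x) => Dc F1 j.1 x)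
      (fun j : ↥(a10 F1 F2 x ∪ a00 F1 F2 x) => Dc F2 j.1 x))

/-- Gradient of the product constraint `F1_j · F2_j` at `x`. -/
noncomputable def gradProd (F1 F2 : (Fin n → ℝ) → Fin κ → ℝ) (j : Fin κ) (x : Fin n → ℝ) :
    (Fin n → ℝ) →L[ℝ] ℝ :=
  F2 x j • Dc F1 j x + F1 x j • Dc F2 j x

/-- LICQ for the Scholtes regularization `S(t)`. -/
def SLICQ (F1 F2 : (Fin n → ℝ) → Fin κ → ℝ) (t : ℝ) (x : Fin n → ℝ) : Prop :=
  LinearIndependent ℝ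
    (Sum.elim (fun j : ↥(Hset F1 F2 t x) => gradProd F1 F2 j.1 x)
      (Sum.elim (fun j : ↥(N1set F1 x) => Dc F1 j.1 x)
        (fun j : ↥(N2set F2 x) => Dc F2 j.1 x)))

/-- W-stationarity with prescribed multipliers (supported on the active index sets). -/
structure WStatWith (f : (Fin n → ℝ) → ℝ) (F1 F2 : (Fin n → ℝ) → Fin κ → ℝ)
    (x : Fin n → ℝ) (σ1 σ2 ϱ1 ϱ2 : Fin κ → ℝ) : Prop where
  feas : x ∈ Mset F1 F2
  supp_s1 : ∀ j, j ∉ a01 F1 F2 x → σ1 j = 0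
  supp_s2 : ∀ j, j ∉ a10 F1 F2 x → σ2 j = 0
  supp_r1 : ∀ j, j ∉ a00 F1 F2 x → ϱ1 j = 0
  supp_r2 : ∀ j, j ∉ a00 F1 F2 x → ϱ2 j = 0
  stat : fderiv ℝ f x =
    ∑ j, (σ1 j • Dc F1 j x + σ2 j • Dc F2 j x + ϱ1 j • Dc F1 j x + ϱ2 j • Dc F2 j x)

/-- C-stationarity with prescribed multipliers. -/
def CStatWith (f : (Fin n → ℝ) → ℝ) (F1 F2 : (Fin n → ℝ) → Fin κ → ℝ)
    (x : Fin n → ℝ) (σ1 σ2 ϱ1 ϱ2 : Fin κ → ℝ) : Prop :=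
  WStatWith f F1 F2 x σ1 σ2 ϱ1 ϱ2 ∧ ∀ j ∈ a00 F1 F2 x, 0 ≤ ϱ1 j * ϱ2 j

/-- S-stationarity with prescribed multipliers. -/
def SStatWith (f : (Fin n → ℝ) → ℝ) (F1 F2 : (Fin n → ℝ) → Fin κ → ℝ)
    (x : Fin n → ℝ) (σ1 σ2 ϱ1 ϱ2 : Fin κ → ℝ) : Prop :=
  WStatWith f F1 F2 x σ1 σ2 ϱ1 ϱ2 ∧ ∀ j ∈ a00 F1 F2 x, 0 ≤ ϱ1 j ∧ 0 ≤ ϱ2 j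

/-- The MPCC Lagrange function for given multipliers. -/
noncomputable def Lag (f : (Fin n → ℝ) → ℝ) (F1 F2 : (Fin n → ℝ) → Fin κ → ℝ)
    (σ1 σ2 ϱ1 ϱ2 : Fin κ → ℝ) (x : Fin n → ℝ) : ℝ :=
  f x - ∑ j, (σ1 j * F1 x j + σ2 j * F2 x j + ϱ1 j * F1 x j + ϱ2 j * F2 x j)

/-- The Hessian of `g` at `x` as a bilinear map, evaluated at `(ξ, ζ)`. -/
noncomputable def hBil (g : (Fin n → ℝ) → ℝ) (x ξ ζ : Fin n → ℝ) : ℝ :=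
  iteratedFDeriv ℝ 2 g x ![ξ, ζ]

/-- The Hessian quadratic form of `g` at `x`. -/
noncomputable def hQ (g : (Fin n → ℝ) → ℝ) (x ξ : Fin n → ℝ) : ℝ := hBil g x ξ ξ

/-- The tangent space `T_x` of MPCC at `x`. -/
def Tspace (F1 F2 : (Fin n → ℝ) → Fin κ → ℝ) (x : Fin n → ℝ) : Set (Fin n → ℝ) :=
  {ξ | (∀ j ∈ a01 F1 F2 x ∪ a00 F1 F2 x, Dc F1 j x ξ = 0) ∧
       (∀ j ∈ a10 F1 F2 x ∪ a00 F1 F2 x, Dc F2 j x ξ = 0)}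

/-- Nondegeneracy of a bilinear form on a set (subspace). -/
def NondegOn (B : (Fin n → ℝ) → (Fin n → ℝ) → ℝ) (T : Set (Fin n → ℝ)) : Prop :=
  ∀ ξ ∈ T, (∀ ζ ∈ T, B ξ ζ = 0) → ξ = 0

/-- `Q` has negative index `q` on `T`: `q` is the maximal dimension of a subspace of `T`
on which `Q` is negative definite. -/
def HasNegIndexOn (Q : (Fin n → ℝ) → ℝ) (T : Set (Fin n → ℝ)) (q : ℕ) : Prop :=
  (∃ W : Submodule ℝ (Fin n → ℝ), (W : Set (Fin n → ℝ)) ⊆ T ∧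
      Module.finrank ℝ ↥W = q ∧ ∀ ξ ∈ W, ξ ≠ 0 → Q ξ < 0) ∧
  (∀ W : Submodule ℝ (Fin n → ℝ), (W : Set (Fin n → ℝ)) ⊆ T →
      (∀ ξ ∈ W, ξ ≠ 0 → Q ξ < 0) → Module.finrank ℝ ↥W ≤ q)

/-- Nondegenerate C-stationary point (NDC1, NDC2, NDC3) with prescribed multipliers. -/
def NondegCStat (f : (Fin n → ℝ) → ℝ) (F1 F2 : (Fin n → ℝ) → Fin κ → ℝ)
    (x : Fin n → ℝ) (σ1 σ2 ϱ1 ϱ2 : Fin κ → ℝ) : Prop :=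
  CStatWith f F1 F2 x σ1 σ2 ϱ1 ϱ2 ∧ MPCCLICQ F1 F2 x ∧
  (∀ j ∈ a00 F1 F2 x, 0 < ϱ1 j * ϱ2 j) ∧
  NondegOn (hBil (Lag f F1 F2 σ1 σ2 ϱ1 ϱ2) x) (Tspace F1 F2 x)

/-- Condition NDC4: non-biactive multipliers do not vanish. -/
def NDC4 (F1 F2 : (Fin n → ℝ) → Fin κ → ℝ) (x : Fin n → ℝ) (σ1 σ2 : Fin κ → ℝ) : Prop :=
  (∀ j ∈ a01 F1 F2 x, σ1 j ≠ 0) ∧ (∀ j ∈ a10 F1 F2 x, σ2 j ≠ 0)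

/-- The biactive index: number of negative biactive multiplier pairs. -/
noncomputable def BIndex (F1 F2 : (Fin n → ℝ) → Fin κ → ℝ) (x : Fin n → ℝ)
    (ϱ1 ϱ2 : Fin κ → ℝ) : ℕ :=
  {j | j ∈ a00 F1 F2 x ∧ ϱ1 j < 0 ∧ ϱ2 j < 0}.ncard

/-- The C-index of a C-stationary point equals `c`. -/
def HasCIndex (f : (Fin n → ℝ) → ℝ) (F1 F2 : (Fin n → ℝ) → Fin κ → ℝ)
    (x : Fin n → ℝ) (σ1 σ2 ϱ1 ϱ2 : Fin κ → ℝ) (c : ℕ) : Prop :=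
  ∃ q : ℕ,
    HasNegIndexOn (hQ (Lag f F1 F2 σ1 σ2 ϱ1 ϱ2) x) (Tspace F1 F2 x) q ∧
    c = q + BIndex F1 F2 x ϱ1 ϱ2

/-- Karush-Kuhn-Tucker point of the Scholtes regularization `S(t)` with multipliers. -/
structure KKTWith (f : (Fin n → ℝ) → ℝ) (F1 F2 : (Fin n → ℝ) → Fin κ → ℝ)
    (t : ℝ) (x : Fin n → ℝ) (η ν1 ν2 : Fin κ → ℝ) : Prop where
  feas : x ∈ MS F1 F2 t
  eta_nn : ∀ j, 0 ≤ η j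
  nu1_nn : ∀ j, 0 ≤ ν1 j
  nu2_nn : ∀ j, 0 ≤ ν2 j
  comp_eta : ∀ j, η j * (t - F1 x j * F2 x j) = 0
  comp_nu1 : ∀ j, ν1 j * F1 x j = 0
  comp_nu2 : ∀ j, ν2 j * F2 x j = 0
  stat : fderiv ℝ f x =
    ∑ j, (-(η j) • gradProd F1 F2 j x + ν1 j • Dc F1 j x + ν2 j • Dc F2 j x)

/-- The Lagrange function of the Scholtes regularization `S(t)`. -/
noncomputable def LagS (f : (Fin n → ℝ) → ℝ) (F1 F2 : (Fin n → ℝ) → Fin κ → ℝ)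
    (t : ℝ) (η ν1 ν2 : Fin κ → ℝ) (x : Fin n → ℝ) : ℝ :=
  f x - ∑ j, (η j * (t - F1 x j * F2 x j) + ν1 j * F1 x j + ν2 j * F2 x j)

/-- The tangent space `T^S_x` of `S(t)` at `x`. -/
def TspaceS (F1 F2 : (Fin n → ℝ) → Fin κ → ℝ) (t : ℝ) (x : Fin n → ℝ) :
    Set (Fin n → ℝ) :=
  {ξ | (∀ j ∈ Hset F1 F2 t x, gradProd F1 F2 j x ξ = 0) ∧
       (∀ j ∈ N1set F1 x, Dc F1 j x ξ = 0) ∧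
       (∀ j ∈ N2set F2 x, Dc F2 j x ξ = 0)}

/-- Nondegenerate KKT point of `S(t)` (ND1, ND2, ND3) with prescribed multipliers. -/
def NondegKKT (f : (Fin n → ℝ) → ℝ) (F1 F2 : (Fin n → ℝ) → Fin κ → ℝ)
    (t : ℝ) (x : Fin n → ℝ) (η ν1 ν2 : Fin κ → ℝ) : Prop :=
  KKTWith f F1 F2 t x η ν1 ν2 ∧ SLICQ F1 F2 t x ∧
  (∀ j ∈ Hset F1 F2 t x, 0 < η j) ∧
  (∀ j ∈ N1set F1 x, 0 < ν1 j) ∧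
  (∀ j ∈ N2set F2 x, 0 < ν2 j) ∧
  NondegOn (hBil (LagS f F1 F2 t η ν1 ν2) x) (TspaceS F1 F2 t x)

/-- KKT point of the smoothing `S^=(t)` with multipliers. -/
structure KKTEqWith (f : (Fin n → ℝ) → ℝ) (F1 F2 : (Fin n → ℝ) → Fin κ → ℝ)
    (t : ℝ) (x : Fin n → ℝ) (lam ν1 ν2 : Fin κ → ℝ) : Prop where
  feas : x ∈ MSeq F1 F2 t
  nu1_nn : ∀ j, 0 ≤ ν1 j
  nu2_nn : ∀ j, 0 ≤ ν2 j
  comp_nu1 : ∀ j, ν1 j * F1 x j = 0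
  comp_nu2 : ∀ j, ν2 j * F2 x j = 0
  stat : fderiv ℝ f x =
    ∑ j, (lam j • gradProd F1 F2 j x + ν1 j • Dc F1 j x + ν2 j • Dc F2 j x)

/-- The Lagrange function of the smoothing `S^=(t)`. -/
noncomputable def LagSeq (f : (Fin n → ℝ) → ℝ) (F1 F2 : (Fin n → ℝ) → Fin κ → ℝ)
    (t : ℝ) (lam ν1 ν2 : Fin κ → ℝ) (x : Fin n → ℝ) : ℝ :=
  f x - ∑ j, (lam j * (F1 x j * F2 x j - t) + ν1 j * F1 x j + ν2 j * F2 x j)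

/-- The tangent space `T^{S=}_x` of `S^=(t)` at `x`. -/
def TspaceSeq (F1 F2 : (Fin n → ℝ) → Fin κ → ℝ) (x : Fin n → ℝ) : Set (Fin n → ℝ) :=
  {ξ | (∀ j, gradProd F1 F2 j x ξ = 0) ∧
       (∀ j, F1 x j = 0 → Dc F1 j x ξ = 0) ∧
       (∀ j, F2 x j = 0 → Dc F2 j x ξ = 0)}

/-- LICQ for the smoothing `S^=(t)` at `x`: gradients of all active constraints
(all equality constraints together with the active bound constraints) are linearly
independent. -/
def SeqLICQ (F1 F2 : (Fin n → ℝ) → Fin κ → ℝ) (x : Fin n → ℝ) : Prop :=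
  LinearIndependent ℝ
    (Sum.elim (fun j : Fin κ => gradProd F1 F2 j x)
      (Sum.elim (fun j : ↥(N1set F1 x) => Dc F1 j.1 x)
        (fun j : ↥(N2set F2 x) => Dc F2 j.1 x)))

/-- Nondegenerate KKT point of the smoothing `S^=(t)` with prescribed multipliers. -/
def NondegKKTEq (f : (Fin n → ℝ) → ℝ) (F1 F2 : (Fin n → ℝ) → Fin κ → ℝ)
    (t : ℝ) (x : Fin n → ℝ) (lam ν1 ν2 : Fin κ → ℝ) : Prop :=
  KKTEqWith f F1 F2 t x lam ν1 ν2 ∧ SeqLICQ F1 F2 x ∧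
  (∀ j ∈ N1set F1 x, 0 < ν1 j) ∧
  (∀ j ∈ N2set F2 x, 0 < ν2 j) ∧
  NondegOn (hBil (LagSeq f F1 F2 t lam ν1 ν2) x) (TspaceSeq F1 F2 x)

/-- The critical cone `C_x` associated with an S-stationary point and its multipliers. -/
def Ccone (F1 F2 : (Fin n → ℝ) → Fin κ → ℝ) (x : Fin n → ℝ)
    (σ1 σ2 ϱ1 ϱ2 : Fin κ → ℝ) : Set (Fin n → ℝ) :=
  {ξ | (∀ j, ((j ∈ a01 F1 F2 x ∧ σ1 j ≠ 0) ∨ (j ∈ a00 F1 F2 x ∧ 0 < ϱ1 j)) →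
        Dc F1 j x ξ = 0) ∧
       (∀ j, ((j ∈ a10 F1 F2 x ∧ σ2 j ≠ 0) ∨ (j ∈ a00 F1 F2 x ∧ 0 < ϱ2 j)) →
        Dc F2 j x ξ = 0)}

/-- The cone `C^=_x` of critical directions used for MPCC-SOC. -/
def CconeEq (F1 F2 : (Fin n → ℝ) → Fin κ → ℝ) (x : Fin n → ℝ)
    (ϱ1 ϱ2 : Fin κ → ℝ) : Set (Fin n → ℝ) :=
  {ξ | (∀ j, (j ∈ a01 F1 F2 x ∨ (j ∈ a00 F1 F2 x ∧ 0 < ϱ1 j)) → Dc F1 j x ξ = 0) ∧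
       (∀ j, (j ∈ a10 F1 F2 x ∨ (j ∈ a00 F1 F2 x ∧ 0 < ϱ2 j)) → Dc F2 j x ξ = 0) ∧
       (∀ j ∈ a00 F1 F2 x, ϱ1 j = 0 → 0 ≤ Dc F1 j x ξ) ∧
       (∀ j ∈ a00 F1 F2 x, ϱ2 j = 0 → 0 ≤ Dc F2 j x ξ)}

/-- Strong second order sufficiency condition. -/
def SSOSC (f : (Fin n → ℝ) → ℝ) (F1 F2 : (Fin n → ℝ) → Fin κ → ℝ)
    (x : Fin n → ℝ) (σ1 σ2 ϱ1 ϱ2 : Fin κ → ℝ) : Prop :=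
  ∀ ξ ∈ Ccone F1 F2 x σ1 σ2 ϱ1 ϱ2, ξ ≠ 0 → 0 < hQ (Lag f F1 F2 σ1 σ2 ϱ1 ϱ2) x ξ

/-- Second order condition for MPCC (MPCC-SOC). -/
def MPCCSOC (f : (Fin n → ℝ) → ℝ) (F1 F2 : (Fin n → ℝ) → Fin κ → ℝ)
    (x : Fin n → ℝ) (σ1 σ2 ϱ1 ϱ2 : Fin κ → ℝ) : Prop :=
  ∀ ξ ∈ CconeEq F1 F2 x ϱ1 ϱ2, ξ ≠ 0 → 0 < hQ (Lag f F1 F2 σ1 σ2 ϱ1 ϱ2) x ξ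

noncomputable def fEx2 : (Fin 3 → ℝ) → ℝ :=
  fun x => -x 0 - x 1 + 2 * x 0 * x 1 + (x 2)^2

noncomputable def F1Ex2 : (Fin 3 → ℝ) → Fin 3 → ℝ :=
  fun x => ![x 0, x 0 + x 1, x 2 - 1]

noncomputable def F2Ex2 : (Fin 3 → ℝ) → Fin 3 → ℝ :=
  fun x => ![x 2 - 2 * x 1, 2 - x 2, x 0 - x 1 + x 2]

noncomputable def xtEx2 (t : ℝ) : Fin 3 → ℝ := ![t/2, t/2, 1]

noncomputable def ηEx2 (t : ℝ) : Fin 3 → ℝ := ![0, 1 - t, 0]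

noncomputable def ν1Ex2 (t : ℝ) : Fin 3 → ℝ := ![0, 0, 2 - t + t^2]

noncomputable def pr (i : Fin 3) : (Fin 3 → ℝ) →L[ℝ] ℝ := ContinuousLinearMap.proj i

lemma hproj (i : Fin 3) (x : Fin 3 → ℝ) :
    HasFDerivAt (fun y : Fin 3 → ℝ => y i) (pr i) x := (pr i).hasFDerivAt

lemma Dc_F1_0 (x ξ : Fin 3 → ℝ) : Dc F1Ex2 0 x ξ = ξ 0 := by
  have h : Dc F1Ex2 0 x = pr 0 := by
    unfold Dc
    simp only [F1Ex2, Matrix.cons_val_zero]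
    exact (hproj 0 x).fderiv
  rw [h]; rfl

lemma Dc_F1_1 (x ξ : Fin 3 → ℝ) : Dc F1Ex2 1 x ξ = ξ 0 + ξ 1 := by
  have h : Dc F1Ex2 1 x = pr 0 + pr 1 := by
    unfold Dc
    simp only [F1Ex2, Matrix.cons_val_one, Matrix.head_cons]
    exact ((hproj 0 x).add (hproj 1 x)).fderiv
  rw [h]; rfl

lemma Dc_F1_2 (x ξ : Fin 3 → ℝ) : Dc F1Ex2 2 x ξ = ξ 2 := by
  have h : Dc F1Ex2 2 x = pr 2 := by
    unfold Dc
    simp only [F1Ex2, Matrix.cons_val_two, Matrix.tail_cons, Matrix.head_cons]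
    exact ((hproj 2 x).sub_const 1).fderiv
  rw [h]; rfl

lemma Dc_F2_0 (x ξ : Fin 3 → ℝ) : Dc F2Ex2 0 x ξ = ξ 2 - 2 * ξ 1 := by
  have h : Dc F2Ex2 0 x = pr 2 - (2:ℝ) • pr 1 := by
    unfold Dc
    simp only [F2Ex2, Matrix.cons_val_zero]
    exact ((hproj 2 x).sub ((hproj 1 x).const_mul 2)).fderiv
  rw [h]; simp [pr]

lemma Dc_F2_1 (x ξ : Fin 3 → ℝ) : Dc F2Ex2 1 x ξ = -ξ 2 := by
  have h : Dc F2Ex2 1 x = -pr 2 := by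
    unfold Dc
    simp only [F2Ex2, Matrix.cons_val_one, Matrix.head_cons, Matrix.cons_val_zero]
    have := ((hasFDerivAt_const (2:ℝ) x).sub (hproj 2 x)).fderiv
    erw [this]; simp
  rw [h]; simp [pr]

lemma Dc_F2_2 (x ξ : Fin 3 → ℝ) : Dc F2Ex2 2 x ξ = ξ 0 - ξ 1 + ξ 2 := by
  have h : Dc F2Ex2 2 x = pr 0 - pr 1 + pr 2 := by
    unfold Dc
    simp only [F2Ex2, Matrix.cons_val_two, Matrix.tail_cons, Matrix.head_cons]
    exact (((hproj 0 x).sub (hproj 1 x)).add (hproj 2 x)).fderiv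
  rw [h]; simp [pr]

lemma fderiv_fEx2 (x ξ : Fin 3 → ℝ) :
    fderiv ℝ fEx2 x ξ = (-1 + 2 * x 1) * ξ 0 + (-1 + 2 * x 0) * ξ 1 + 2 * x 2 * ξ 2 := by
  have h0 := hproj 0 x
  have h1 := hproj 1 x
  have h2 := hproj 2 x
  have hf : HasFDerivAt fEx2
      (((-pr 0 - pr 1) + ((2:ℝ) • ((x 0) • pr 1 + (x 1) • pr 0))) +
        ((x 2) • pr 2 + (x 2) • pr 2)) x := by
    have heq : fEx2 = fun y : Fin 3 → ℝ => (-y 0 - y 1 + 2 * (y 0 * y 1)) + y 2 * y 2 := by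
      funext y; simp [fEx2]; ring
    rw [heq]
    exact ((h0.neg.sub h1).add ((h0.mul h1).const_mul 2)).add (h2.mul h2)
  rw [hf.fderiv]
  simp [pr]
  ring

lemma gradProd_apply (F1 F2 : (Fin 3 → ℝ) → Fin 3 → ℝ) (j : Fin 3) (x ξ : Fin 3 → ℝ) :
    gradProd F1 F2 j x ξ = F2 x j * Dc F1 j x ξ + F1 x j * Dc F2 j x ξ := by
  simp [gradProd]

lemma li_helper {ι : Type*} [Fintype ι] [DecidableEq ι]
    (v : ι → ((Fin 3 → ℝ) →L[ℝ] ℝ)) (u : ι → Fin 3 → ℝ) (c : ι → ℝ)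
    (hc : ∀ i, c i ≠ 0) (h : ∀ i j, v j (u i) = if i = j then c i else 0) :
    LinearIndependent ℝ v := by
  rw [Fintype.linearIndependent_iff]
  intro g hg i
  have h2 : (∑ j, g j • v j) (u i) = 0 := by rw [hg]; rfl
  simp only [ContinuousLinearMap.coe_sum', Finset.sum_apply, ContinuousLinearMap.coe_smul',
    Pi.smul_apply, smul_eq_mul, h, mul_ite, mul_zero, Finset.sum_ite_eq, Finset.mem_univ,
    if_true] at h2
  exact (mul_eq_zero.1 h2).resolve_right (hc i)
section
variable {t : ℝ} (ht : t ∈ Set.Ioo (0:ℝ) (1/2))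

lemma F1xt : F1Ex2 ![0, t, 1] = ![0, t, 0] := by
  funext j; fin_cases j <;> simp [F1Ex2]

lemma F2xt : F2Ex2 ![0, t, 1] = ![1 - 2*t, 1, 1 - t] := by
  funext j; fin_cases j <;> simp [F2Ex2] <;> ring

lemma F1xh : F1Ex2 ![t, 0, 1] = ![t, t, 0] := by
  funext j; fin_cases j <;> simp [F1Ex2]

lemma F2xh : F2Ex2 ![t, 0, 1] = ![1, 1, 1 + t] := by
  funext j; fin_cases j <;> simp [F2Ex2] <;> ring

include ht

lemma Hxt : Hset F1Ex2 F2Ex2 t ![0, t, 1] = {1} := by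
  obtain ⟨ht0, ht1⟩ := ht
  ext j
  simp only [Hset, Set.mem_setOf_eq, Set.mem_singleton_iff, F1xt, F2xt]
  fin_cases j <;> simp <;> intro h <;> linarith

lemma N1xt : N1set F1Ex2 ![0, t, 1] = {0, 2} := by
  obtain ⟨ht0, ht1⟩ := ht
  ext j
  simp only [N1set, Set.mem_setOf_eq, Set.mem_insert_iff, Set.mem_singleton_iff, F1xt]
  fin_cases j <;> simp <;> intro h <;> linarith

lemma N2xt : N2set F2Ex2 ![0, t, 1] = ∅ := by
  obtain ⟨ht0, ht1⟩ := ht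
  ext j
  simp only [N2set, Set.mem_setOf_eq, Set.mem_empty_iff_false, iff_false, F2xt]
  fin_cases j <;> simp <;> intro h <;> linarith

lemma Hxh : Hset F1Ex2 F2Ex2 t ![t, 0, 1] = {0, 1} := by
  obtain ⟨ht0, ht1⟩ := ht
  ext j
  simp only [Hset, Set.mem_setOf_eq, Set.mem_insert_iff, Set.mem_singleton_iff, F1xh, F2xh]
  fin_cases j <;> simp <;> intro h <;> linarith

lemma N1xh : N1set F1Ex2 ![t, 0, 1] = {2} := by
  obtain ⟨ht0, ht1⟩ := ht
  ext j
  simp only [N1set, Set.mem_setOf_eq, Set.mem_singleton_iff, F1xh]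
  fin_cases j <;> simp <;> intro h <;> linarith

lemma N2xh : N2set F2Ex2 ![t, 0, 1] = ∅ := by
  obtain ⟨ht0, ht1⟩ := ht
  ext j
  simp only [N2set, Set.mem_setOf_eq, Set.mem_empty_iff_false, iff_false, F2xh]
  fin_cases j <;> simp <;> intro h <;> linarith

end
section
variable {t : ℝ} (ht : t ∈ Set.Ioo (0:ℝ) (1/2))
include ht

lemma SLICQxt : SLICQ F1Ex2 F2Ex2 t ![0, t, 1] := by
  obtain ⟨ht0, ht1⟩ := ht
  unfold SLICQ
  rw [Hxt ⟨ht0, ht1⟩, N1xt ⟨ht0, ht1⟩, N2xt ⟨ht0, ht1⟩]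
  apply li_helper _
    (Sum.elim (fun _ => ![0, 1, 0])
      (Sum.elim (fun j => if j.1 = 0 then ![1, -1, 0] else ![0, t, 1]) (fun _ => 0)))
    (fun _ => 1) (fun _ => one_ne_zero)
  rintro (⟨i, hi⟩ | ⟨i, hi⟩ | ⟨i, hi⟩) (⟨j, hj⟩ | ⟨j, hj⟩ | ⟨j, hj⟩) <;>
    simp only [Set.mem_singleton_iff, Set.mem_insert_iff, Set.mem_empty_iff_false] at hi hj <;>
    first
      | exact hi.elim
      | exact hj.elim
      | (rcases hi with rfl | rfl <;> rcases hj with rfl | rfl <;>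
          simp [Sum.elim_inl, Sum.elim_inr, gradProd_apply, F1xt, F2xt, Subtype.ext_iff,
            Dc_F1_0, Dc_F1_1, Dc_F1_2, Dc_F2_0, Dc_F2_1, Dc_F2_2] <;> ring)
      | (subst hi <;> try subst hj) <;>
        (try rcases hj with rfl | rfl) <;> (try rcases hi with rfl | rfl) <;>
          simp [Sum.elim_inl, Sum.elim_inr, gradProd_apply, F1xt, F2xt, Subtype.ext_iff,
            Dc_F1_0, Dc_F1_1, Dc_F1_2, Dc_F2_0, Dc_F2_1, Dc_F2_2] <;> ring
end
section
variable {t : ℝ} (ht : t ∈ Set.Ioo (0:ℝ) (1/2))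
include ht

lemma SLICQxh : SLICQ F1Ex2 F2Ex2 t ![t, 0, 1] := by
  obtain ⟨ht0, ht1⟩ := ht
  unfold SLICQ
  rw [Hxh ⟨ht0, ht1⟩, N1xh ⟨ht0, ht1⟩, N2xh ⟨ht0, ht1⟩]
  apply li_helper _
    (Sum.elim (fun j => if j.1 = 0 then ![1, -1, 0] else ![2*t, 1, 0])
      (Sum.elim (fun _ => ![2*t^2 - t, 2*t, 1 + 2*t]) (fun _ => 0)))
    (fun _ => 1 + 2*t) (fun _ => by show 1 + 2*t ≠ 0; positivity)
  rintro (⟨i, hi⟩ | ⟨i, hi⟩ | ⟨i, hi⟩) (⟨j, hj⟩ | ⟨j, hj⟩ | ⟨j, hj⟩) <;>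
    simp only [Set.mem_singleton_iff, Set.mem_insert_iff, Set.mem_empty_iff_false] at hi hj <;>
    first
      | exact hi.elim
      | exact hj.elim
      | ((try rcases hi with rfl | rfl) <;> (try rcases hj with rfl | rfl) <;>
          (try subst hi) <;> (try subst hj) <;>
          simp [Sum.elim_inl, Sum.elim_inr, gradProd_apply, F1xh, F2xh, Subtype.ext_iff,
            Dc_F1_0, Dc_F1_1, Dc_F1_2, Dc_F2_0, Dc_F2_1, Dc_F2_2] <;> ring)
end
lemma negIndex_zero {Q : (Fin 3 → ℝ) → ℝ} {T : Set (Fin 3 → ℝ)}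
    (hT : T ⊆ {0}) (h0 : (0 : Fin 3 → ℝ) ∈ T) : HasNegIndexOn Q T 0 := by
  constructor
  · refine ⟨⊥, ?_, by simp, ?_⟩
    · intro x hx
      simp only [SetLike.mem_coe, Submodule.mem_bot] at hx
      subst hx; exact h0
    · intro ξ hξ hne
      simp only [Submodule.mem_bot] at hξ
      exact absurd hξ hne
  · intro W hW _
    have hWbot : W = ⊥ := by
      rw [Submodule.eq_bot_iff]
      intro x hx
      exact hT (hW hx)
    simp [hWbot]

section
variable {t : ℝ} (ht : t ∈ Set.Ioo (0:ℝ) (1/2))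
include ht

lemma Txt_sub : TspaceS F1Ex2 F2Ex2 t ![0, t, 1] ⊆ {0} := by
  obtain ⟨ht0, ht1⟩ := ht
  rintro ξ ⟨h1, h2, _⟩
  have m1 : (1 : Fin 3) ∈ Hset F1Ex2 F2Ex2 t ![0, t, 1] := by
    simp [Hset, F1xt, F2xt]
  have m0 : (0 : Fin 3) ∈ N1set F1Ex2 ![0, t, 1] := by simp [N1set, F1xt]
  have m2 : (2 : Fin 3) ∈ N1set F1Ex2 ![0, t, 1] := by simp [N1set, F1xt]
  have e1 := h1 1 m1
  have e0 := h2 0 m0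
  have e2 := h2 2 m2
  rw [gradProd_apply] at e1
  rw [Dc_F1_1, Dc_F2_1, F1xt, F2xt] at e1
  rw [Dc_F1_0] at e0
  rw [Dc_F1_2] at e2
  simp at e1
  rw [e0, e2] at e1
  have hx1 : ξ 1 = 0 := by linarith
  show ξ = 0
  funext j
  fin_cases j <;> simpa

lemma Txh_sub : TspaceS F1Ex2 F2Ex2 t ![t, 0, 1] ⊆ {0} := by
  obtain ⟨ht0, ht1⟩ := ht
  rintro ξ ⟨h1, h2, _⟩
  have m0 : (0 : Fin 3) ∈ Hset F1Ex2 F2Ex2 t ![t, 0, 1] := by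
    simp [Hset, F1xh, F2xh]
  have m1 : (1 : Fin 3) ∈ Hset F1Ex2 F2Ex2 t ![t, 0, 1] := by
    simp [Hset, F1xh, F2xh]
  have m2 : (2 : Fin 3) ∈ N1set F1Ex2 ![t, 0, 1] := by simp [N1set, F1xh]
  have e0 := h1 0 m0
  have e1 := h1 1 m1
  have e2 := h2 2 m2
  rw [gradProd_apply, Dc_F1_0, Dc_F2_0, F1xh, F2xh] at e0
  rw [gradProd_apply, Dc_F1_1, Dc_F2_1, F1xh, F2xh] at e1
  rw [Dc_F1_2] at e2
  simp at e0 e1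
  rw [e2] at e0 e1
  have h1' : (1 + 2*t) * ξ 1 = 0 := by linear_combination e1 - e0
  have hx1 : ξ 1 = 0 := by
    rcases mul_eq_zero.mp h1' with h | h
    · linarith
    · exact h
  have hx0 : ξ 0 = 0 := by
    rw [hx1] at e1
    linarith
  show ξ = 0
  funext j
  fin_cases j <;> simpa

lemma T0_xt : (0 : Fin 3 → ℝ) ∈ TspaceS F1Ex2 F2Ex2 t ![0, t, 1] :=
  ⟨fun j _ => map_zero _, fun j _ => map_zero _, fun j _ => map_zero _⟩

lemma T0_xh : (0 : Fin 3 → ℝ) ∈ TspaceS F1Ex2 F2Ex2 t ![t, 0, 1] :=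
  ⟨fun j _ => map_zero _, fun j _ => map_zero _, fun j _ => map_zero _⟩

end
section
variable {t : ℝ} (ht : t ∈ Set.Ioo (0:ℝ) (1/2))
include ht

lemma KKTxt : KKTWith fEx2 F1Ex2 F2Ex2 t ![0, t, 1] ![0, 1, 0] ![2*t, 0, 2 - t] 0 := by
  obtain ⟨ht0, ht1⟩ := ht
  refine ⟨?_, ?_, ?_, ?_, ?_, ?_, ?_, ?_⟩
  · intro j
    rw [F1xt, F2xt]
    fin_cases j <;> norm_num <;> (try constructor) <;> linarith
  · intro j; fin_cases j <;> norm_num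
  · intro j; fin_cases j <;> norm_num <;> (try constructor) <;> linarith
  · intro j; simp
  · intro j
    rw [F1xt, F2xt]
    fin_cases j <;> norm_num
  · intro j
    rw [F1xt]
    fin_cases j <;> norm_num
  · intro j; simp
  · ext ξ
    rw [fderiv_fEx2]
    simp only [ContinuousLinearMap.coe_sum', Finset.sum_apply, Fin.sum_univ_three,
      ContinuousLinearMap.add_apply, ContinuousLinearMap.coe_smul', Pi.smul_apply,
      ContinuousLinearMap.neg_apply, smul_eq_mul, gradProd_apply,
      Dc_F1_0, Dc_F1_1, Dc_F1_2, Dc_F2_0, Dc_F2_1, Dc_F2_2, F1xt, F2xt]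
    norm_num [Matrix.cons_val_two, Matrix.tail_cons, Matrix.head_cons]
    ring

lemma KKTxh : KKTWith fEx2 F1Ex2 F2Ex2 t ![t, 0, 1]
    ![2*t/(1 + 2*t), 1/(1 + 2*t), 0] ![0, 0, 2 + (2*t^2 - t)/(1 + 2*t)] 0 := by
  obtain ⟨ht0, ht1⟩ := ht
  have hd : (0:ℝ) < 1 + 2*t := by linarith
  refine ⟨?_, ?_, ?_, ?_, ?_, ?_, ?_, ?_⟩
  · intro j
    rw [F1xh, F2xh]
    fin_cases j <;> norm_num <;> (try constructor) <;> linarith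
  · intro j
    fin_cases j <;> norm_num <;> positivity
  · intro j
    fin_cases j <;> norm_num
    have heq : 2 + (2*t^2 - t)/(1 + 2*t) = (2 + 3*t + 2*t^2)/(1 + 2*t) := by
      field_simp
      ring
    rw [heq]
    positivity
  · intro j; simp
  · intro j
    rw [F1xh, F2xh]
    fin_cases j <;> norm_num
  · intro j
    rw [F1xh]
    fin_cases j <;> norm_num
  · intro j; simp
  · ext ξ
    rw [fderiv_fEx2]
    simp only [ContinuousLinearMap.coe_sum', Finset.sum_apply, Fin.sum_univ_three,
      ContinuousLinearMap.add_apply, ContinuousLinearMap.coe_smul', Pi.smul_apply,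
      ContinuousLinearMap.neg_apply, smul_eq_mul, gradProd_apply,
      Dc_F1_0, Dc_F1_1, Dc_F1_2, Dc_F2_0, Dc_F2_1, Dc_F2_2, F1xh, F2xh]
    norm_num [Matrix.cons_val_two, Matrix.tail_cons, Matrix.head_cons]
    field_simp
    ring

end
section
variable {t : ℝ} (ht : t ∈ Set.Ioo (0:ℝ) (1/2))
include ht

lemma uniq_xt (η ν1 ν2 : Fin 3 → ℝ) (hK : KKTWith fEx2 F1Ex2 F2Ex2 t ![0, t, 1] η ν1 ν2) :
    η = ![0, 1, 0] ∧ ν1 = ![2*t, 0, 2 - t] ∧ ν2 = 0 := by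
  obtain ⟨ht0, ht1⟩ := ht
  have hν2 : ∀ j, ν2 j = 0 := by
    intro j
    have h := hK.comp_nu2 j
    rw [F2xt] at h
    fin_cases j <;> simp at h <;>
      first | exact h | exact h.resolve_right (by intro hh; linarith)
  have hη0 : η 0 = 0 := by
    have h := hK.comp_eta 0
    rw [F1xt, F2xt] at h
    simp at h
    rcases h with h | h
    · exact h
    · linarith
  have hη2 : η 2 = 0 := by
    have h := hK.comp_eta 2
    rw [F1xt, F2xt] at h
    simp at h
    rcases h with h | h
    · exact h
    · linarith
  have hν11 : ν1 1 = 0 := by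
    have h := hK.comp_nu1 1
    rw [F1xt] at h
    simp at h
    rcases h with h | h
    · exact h
    · exact absurd h (ne_of_gt ht0)
  have hs : ∀ ξ : Fin 3 → ℝ, fderiv ℝ fEx2 ![0, t, 1] ξ =
      ∑ j, (-(η j) * gradProd F1Ex2 F2Ex2 j ![0, t, 1] ξ + ν1 j * Dc F1Ex2 j ![0, t, 1] ξ
        + ν2 j * Dc F2Ex2 j ![0, t, 1] ξ) := by
    intro ξ
    rw [hK.stat]
    simp [Fin.sum_univ_three]
  have e0 := hs ![1, 0, 0]
  have e1 := hs ![0, 1, 0]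
  have e2 := hs ![0, 0, 1]
  rw [fderiv_fEx2] at e0 e1 e2
  simp only [Fin.sum_univ_three, gradProd_apply, Dc_F1_0, Dc_F1_1, Dc_F1_2, Dc_F2_0, Dc_F2_1,
    Dc_F2_2, F1xt, F2xt, hν2, hη0, hη2, hν11] at e0 e1 e2
  norm_num [Matrix.cons_val_two, Matrix.tail_cons, Matrix.head_cons] at e0 e1 e2
  have hη1 : η 1 = 1 := by linarith
  have hν10 : ν1 0 = 2*t := by linarith
  have hν12 : ν1 2 = 2 - t := by
    rw [hη1] at e2
    linarith
  refine ⟨?_, ?_, ?_⟩ <;> funext j <;> fin_cases j <;>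
    simp [hη0, hη1, hη2, hν10, hν11, hν12, hν2]

lemma uniq_xh (η ν1 ν2 : Fin 3 → ℝ) (hK : KKTWith fEx2 F1Ex2 F2Ex2 t ![t, 0, 1] η ν1 ν2) :
    η = ![2*t/(1 + 2*t), 1/(1 + 2*t), 0] ∧
    ν1 = ![0, 0, 2 + (2*t^2 - t)/(1 + 2*t)] ∧ ν2 = 0 := by
  obtain ⟨ht0, ht1⟩ := ht
  have hd : (0:ℝ) < 1 + 2*t := by linarith
  have hν2 : ∀ j, ν2 j = 0 := by
    intro j
    have h := hK.comp_nu2 j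
    rw [F2xh] at h
    fin_cases j <;> simp at h <;>
      first | exact h | exact h.resolve_right (by intro hh; linarith)
  have hη2 : η 2 = 0 := by
    have h := hK.comp_eta 2
    rw [F1xh, F2xh] at h
    simp at h
    rcases h with h | h
    · exact h
    · linarith
  have hν10 : ν1 0 = 0 := by
    have h := hK.comp_nu1 0
    rw [F1xh] at h
    simp at h
    rcases h with h | h
    · exact h
    · exact absurd h (ne_of_gt ht0)
  have hν11 : ν1 1 = 0 := by
    have h := hK.comp_nu1 1
    rw [F1xh] at h
    simp at h
    rcases h with h | h
    · exact h
    · exact absurd h (ne_of_gt ht0)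
  have hs : ∀ ξ : Fin 3 → ℝ, fderiv ℝ fEx2 ![t, 0, 1] ξ =
      ∑ j, (-(η j) * gradProd F1Ex2 F2Ex2 j ![t, 0, 1] ξ + ν1 j * Dc F1Ex2 j ![t, 0, 1] ξ
        + ν2 j * Dc F2Ex2 j ![t, 0, 1] ξ) := by
    intro ξ
    rw [hK.stat]
    simp [Fin.sum_univ_three]
  have e0 := hs ![1, 0, 0]
  have e1 := hs ![0, 1, 0]
  have e2 := hs ![0, 0, 1]
  rw [fderiv_fEx2] at e0 e1 e2
  simp only [Fin.sum_univ_three, gradProd_apply, Dc_F1_0, Dc_F1_1, Dc_F1_2, Dc_F2_0, Dc_F2_1,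
    Dc_F2_2, F1xh, F2xh, hν2, hη2, hν10, hν11] at e0 e1 e2
  norm_num [Matrix.cons_val_two, Matrix.tail_cons, Matrix.head_cons] at e0 e1 e2
  have hη0 : η 0 = 2*t/(1 + 2*t) := by
    rw [eq_div_iff (ne_of_gt hd)]
    nlinarith [e0, e1]
  have hη1 : η 1 = 1/(1 + 2*t) := by
    rw [eq_div_iff (ne_of_gt hd)]
    nlinarith [e0, e1]
  have hν12 : ν1 2 = 2 + (2*t^2 - t)/(1 + 2*t) := by
    rw [hη0, hη1] at e2
    field_simp at e2 ⊢
    nlinarith [e2]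
  refine ⟨?_, ?_, ?_⟩ <;> funext j <;> fin_cases j <;>
    simp [hη0, hη1, hη2, hν10, hν11, hν12, hν2]

end
section
variable {t : ℝ} (ht : t ∈ Set.Ioo (0:ℝ) (1/2))
include ht

lemma NDxt : NondegKKT fEx2 F1Ex2 F2Ex2 t ![0, t, 1] ![0, 1, 0] ![2*t, 0, 2 - t] 0 := by
  obtain ⟨ht0, ht1⟩ := ht
  refine ⟨KKTxt ⟨ht0, ht1⟩, SLICQxt ⟨ht0, ht1⟩, ?_, ?_, ?_, ?_⟩
  · rw [Hxt ⟨ht0, ht1⟩]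
    rintro j hj
    rw [Set.mem_singleton_iff] at hj
    subst hj
    norm_num
  · rw [N1xt ⟨ht0, ht1⟩]
    rintro j hj
    rcases hj with rfl | hj
    · norm_num; linarith
    · rw [Set.mem_singleton_iff] at hj
      subst hj
      norm_num [Matrix.cons_val_two, Matrix.tail_cons, Matrix.head_cons]; linarith
  · rw [N2xt ⟨ht0, ht1⟩]
    rintro j hj
    exact absurd hj (Set.notMem_empty j)
  · exact fun ξ hξ _ => Txt_sub ⟨ht0, ht1⟩ hξ

lemma NDxh : NondegKKT fEx2 F1Ex2 F2Ex2 t ![t, 0, 1]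
    ![2*t/(1 + 2*t), 1/(1 + 2*t), 0] ![0, 0, 2 + (2*t^2 - t)/(1 + 2*t)] 0 := by
  obtain ⟨ht0, ht1⟩ := ht
  have hd : (0:ℝ) < 1 + 2*t := by linarith
  refine ⟨KKTxh ⟨ht0, ht1⟩, SLICQxh ⟨ht0, ht1⟩, ?_, ?_, ?_, ?_⟩
  · rw [Hxh ⟨ht0, ht1⟩]
    rintro j hj
    rcases hj with rfl | hj
    · norm_num; positivity
    · rw [Set.mem_singleton_iff] at hj
      subst hj
      norm_num; positivity
  · rw [N1xh ⟨ht0, ht1⟩]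
    rintro j hj
    rw [Set.mem_singleton_iff] at hj
    subst hj
    have heq : 2 + (2*t^2 - t)/(1 + 2*t) = (2 + 3*t + 2*t^2)/(1 + 2*t) := by
      field_simp
      ring
    norm_num [Matrix.cons_val_two, Matrix.tail_cons, Matrix.head_cons]
    rw [heq]
    positivity
  · rw [N2xh ⟨ht0, ht1⟩]
    rintro j hj
    exact absurd hj (Set.notMem_empty j)
  · exact fun ξ hξ _ => Txh_sub ⟨ht0, ht1⟩ hξ

end

/-- Example (non-uniqueness in absence of NDC4): for `t ∈ (0, 1/2)`,
both `x̃^t = (0,t,1)` and `x̂^t = (t,0,1)` are nondegenerate KKT points of `S(t)` with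
quadratic index `0`, with the stated active sets and unique multipliers, and both
converge to `(0,0,1)` as `t → 0⁺`. -/
theorem example_two_minimizers :
    (∀ t ∈ Set.Ioo (0:ℝ) (1/2),
      (NondegKKT fEx2 F1Ex2 F2Ex2 t ![0, t, 1] ![0, 1, 0] ![2*t, 0, 2 - t] 0 ∧
        Hset F1Ex2 F2Ex2 t ![0, t, 1] = {1} ∧
        N1set F1Ex2 ![0, t, 1] = {0, 2} ∧
        N2set F2Ex2 ![0, t, 1] = ∅ ∧
        (∀ η ν1 ν2 : Fin 3 → ℝ, KKTWith fEx2 F1Ex2 F2Ex2 t ![0, t, 1] η ν1 ν2 →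
          η = ![0, 1, 0] ∧ ν1 = ![2*t, 0, 2 - t] ∧ ν2 = 0) ∧
        HasNegIndexOn
          (hQ (LagS fEx2 F1Ex2 F2Ex2 t ![0, 1, 0] ![2*t, 0, 2 - t] 0) ![0, t, 1])
          (TspaceS F1Ex2 F2Ex2 t ![0, t, 1]) 0) ∧
      (NondegKKT fEx2 F1Ex2 F2Ex2 t ![t, 0, 1]
          ![2*t/(1 + 2*t), 1/(1 + 2*t), 0] ![0, 0, 2 + (2*t^2 - t)/(1 + 2*t)] 0 ∧
        Hset F1Ex2 F2Ex2 t ![t, 0, 1] = {0, 1} ∧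
        N1set F1Ex2 ![t, 0, 1] = {2} ∧
        N2set F2Ex2 ![t, 0, 1] = ∅ ∧
        (∀ η ν1 ν2 : Fin 3 → ℝ, KKTWith fEx2 F1Ex2 F2Ex2 t ![t, 0, 1] η ν1 ν2 →
          η = ![2*t/(1 + 2*t), 1/(1 + 2*t), 0] ∧
          ν1 = ![0, 0, 2 + (2*t^2 - t)/(1 + 2*t)] ∧ ν2 = 0) ∧
        HasNegIndexOn
          (hQ (LagS fEx2 F1Ex2 F2Ex2 t ![2*t/(1 + 2*t), 1/(1 + 2*t), 0]
            ![0, 0, 2 + (2*t^2 - t)/(1 + 2*t)] 0) ![t, 0, 1])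
          (TspaceS F1Ex2 F2Ex2 t ![t, 0, 1]) 0)) ∧
    Tendsto (fun t : ℝ => (![0, t, 1] : Fin 3 → ℝ)) (𝓝[>] (0:ℝ)) (𝓝 ![0, 0, 1]) ∧
    Tendsto (fun t : ℝ => (![t, 0, 1] : Fin 3 → ℝ)) (𝓝[>] (0:ℝ)) (𝓝 ![0, 0, 1]) := by

  refine ⟨fun t ht => ⟨⟨NDxt ht, Hxt ht, N1xt ht, N2xt ht, fun η ν1 ν2 hK => uniq_xt ht η ν1 ν2 hK,
      negIndex_zero (Txt_sub ht) (T0_xt ht)⟩,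
    ⟨NDxh ht, Hxh ht, N1xh ht, N2xh ht, fun η ν1 ν2 hK => uniq_xh ht η ν1 ν2 hK,
      negIndex_zero (Txh_sub ht) (T0_xh ht)⟩⟩, ?_, ?_⟩ <;>
  · rw [tendsto_pi_nhds]
    intro i
    fin_cases i <;> simp <;>
      exact tendsto_id.mono_left nhdsWithin_le_nhds

end MPCCPaper
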